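/- Let H be a Hopf algebra over k with antipode S, and H⁰ its Sweedler dual. Then the transpose map ᵗS : f ↦ f∘S maps H⁰ into H⁰, and ᵗS is an antipode for the bialgebra structure on H⁰ given by convolution product ∗_Δ, unit ε, coproduct the transpose of multiplication, and counit f ↦ f(1). -/

import Mathlib

open TensorProduct Coalgebra

/-- Membership in the Sweedler dual. -/
def InSweedlerDual (k : Type*) [Field k] {H : Type*} [Ring H] [Algebra k H]
    (f : Module.Dual k H) : Prop :=
  FiniteDimensional k
    (Submodule.span k (Set.range fun s : H => f ∘ₗ LinearMap.mulRight k s))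

/-- Convolution product on the dual. -/
noncomputable def convProd {k : Type*} [Field k] {H : Type*} [Ring H] [HopfAlgebra k H]
    (φ ψ : Module.Dual k H) : Module.Dual k H :=
  (TensorProduct.lid k k).toLinearMap ∘ₗ (TensorProduct.map φ ψ) ∘ₗ comul

/- ### Auxiliary lemmas -/

lemma sum4_comm {M : Type*} [AddCommMonoid M] {ιa ιb : Type*} {κa : ιa → Type*}
    {κb : ιb → Type*} (sa : Finset ιa) (sb : Finset ιb) (ta : ∀ i, Finset (κa i))
    (tb : ∀ j, Finset (κb j)) (f : (i : ιa) → κa i → (j : ιb) → κb j → M) :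
    ∑ i ∈ sa, ∑ p ∈ ta i, ∑ j ∈ sb, ∑ q ∈ tb j, f i p j q
      = ∑ j ∈ sb, ∑ q ∈ tb j, ∑ i ∈ sa, ∑ p ∈ ta i, f i p j q := by
  calc ∑ i ∈ sa, ∑ p ∈ ta i, ∑ j ∈ sb, ∑ q ∈ tb j, f i p j q
      = ∑ i ∈ sa, ∑ j ∈ sb, ∑ p ∈ ta i, ∑ q ∈ tb j, f i p j q :=
        Finset.sum_congr rfl fun i _ => Finset.sum_comm
    _ = ∑ j ∈ sb, ∑ i ∈ sa, ∑ p ∈ ta i, ∑ q ∈ tb j, f i p j q := Finset.sum_comm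
    _ = ∑ j ∈ sb, ∑ i ∈ sa, ∑ q ∈ tb j, ∑ p ∈ ta i, f i p j q :=
        Finset.sum_congr rfl fun j _ => Finset.sum_congr rfl fun i _ => Finset.sum_comm
    _ = ∑ j ∈ sb, ∑ q ∈ tb j, ∑ i ∈ sa, ∑ p ∈ ta i, f i p j q :=
        Finset.sum_congr rfl fun j _ => Finset.sum_comm

section Anti

variable {k : Type*} [Field k] {H : Type*} [Ring H] [HopfAlgebra k H]

local notation "S" => HopfAlgebra.antipode (R := k) (A := H)
local notation "ε" => Coalgebra.counit (R := k)

lemma repr_sum_smul_left {ι : Type*} (a : H) (r : Coalgebra.Repr k a ι) :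
    ∑ i ∈ r.index, ε (r.right i) • r.left i = a := by
  have h := Coalgebra.sum_tmul_counit_eq (R := k) r
  have := congrArg (TensorProduct.rid k H) h
  simp only [map_sum, TensorProduct.rid_tmul, one_smul] at this
  exact this

lemma repr_sum_smul_right {ι : Type*} (a : H) (r : Coalgebra.Repr k a ι) :
    ∑ i ∈ r.index, ε (r.left i) • r.right i = a := by
  have h := Coalgebra.sum_counit_tmul_eq (R := k) r
  have := congrArg (TensorProduct.lid k H) h
  simp only [map_sum, TensorProduct.lid_tmul, one_smul] at this
  exact this

/-- A representation of the comultiplication of a product, built from representations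
of the factors, using that comultiplication is an algebra map. -/
noncomputable def mulRepr {ι κ : Type*} {x y : H} (rx : Coalgebra.Repr k x ι) (ry : Coalgebra.Repr k y κ) :
    Coalgebra.Repr k (x * y) (ι × κ) where
  index := rx.index ×ˢ ry.index
  left := fun p => rx.left p.1 * ry.left p.2
  right := fun p => rx.right p.1 * ry.right p.2
  eq := by
    rw [Bialgebra.comul_mul, ← rx.eq, ← ry.eq, Finset.sum_mul_sum]
    rw [Finset.sum_product]
    simp [Algebra.TensorProduct.tmul_mul_tmul]

lemma antipodemul₂ {ι κ : Type*} {x y : H} (rx : Coalgebra.Repr k x ι) (ry : Coalgebra.Repr k y κ) :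
    ∑ i ∈ rx.index, ∑ j ∈ ry.index,
      S (rx.left i * ry.left j) * (rx.right i * ry.right j)
      = (ε x * ε y) • (1 : H) := by
  have h := HopfAlgebra.sum_antipode_mul_eq_smul (R := k) (mulRepr rx ry)
  rw [Bialgebra.counit_mul] at h
  rw [← h]
  simp only [mulRepr]
  rw [Finset.sum_product]

lemma mulantipode₂ {ι κ : Type*} {x y : H} (rx : Coalgebra.Repr k x ι) (ry : Coalgebra.Repr k y κ) :
    ∑ i ∈ rx.index, ∑ j ∈ ry.index,
      (rx.left i * ry.left j) * (S (ry.right j) * S (rx.right i))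
      = (ε x * ε y) • (1 : H) := by
  have hy := HopfAlgebra.sum_mul_antipode_eq_smul (R := k) ry
  have hx := HopfAlgebra.sum_mul_antipode_eq_smul (R := k) rx
  calc ∑ i ∈ rx.index, ∑ j ∈ ry.index,
        (rx.left i * ry.left j) * (S (ry.right j) * S (rx.right i))
      = ∑ i ∈ rx.index,
          rx.left i * ((∑ j ∈ ry.index, ry.left j * S (ry.right j)) * S (rx.right i)) := by
        refine Finset.sum_congr rfl fun i _ => ?_
        rw [Finset.sum_mul, Finset.mul_sum]
        refine Finset.sum_congr rfl fun j _ => by noncomm_ring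
    _ = ∑ i ∈ rx.index, ε y • (rx.left i * S (rx.right i)) := by
        rw [hy]
        refine Finset.sum_congr rfl fun i _ => by
          rw [smul_mul_assoc, one_mul, mul_smul_comm]
    _ = (ε x * ε y) • (1 : H) := by
        rw [← Finset.smul_sum, hx, smul_smul, mul_comm]

end Anti

/-- The hexalinear map `(x,y,z,u,v,w) ↦ S(xu) * ((yv) * (Sw * Sz))` as a bilinear map
on `H ⊗ (H ⊗ H)`. -/
noncomputable def hexMap (k : Type*) [Field k] (H : Type*) [Ring H] [HopfAlgebra k H] :
    (H ⊗[k] (H ⊗[k] H)) →ₗ[k] (H ⊗[k] (H ⊗[k] H)) →ₗ[k] H :=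
  TensorProduct.curry <|
    (LinearMap.mul' k H) ∘ₗ ((LinearMap.mul' k H).lTensor H) ∘ₗ
      (TensorProduct.map ((HopfAlgebra.antipode (R := k)) ∘ₗ LinearMap.mul' k H)
        ((TensorProduct.map (LinearMap.mul' k H)
          ((LinearMap.mul' k H) ∘ₗ
            (TensorProduct.map (HopfAlgebra.antipode (R := k)) (HopfAlgebra.antipode (R := k))) ∘ₗ
            (TensorProduct.comm k H H).toLinearMap)) ∘ₗ
          (TensorProduct.tensorTensorTensorComm k H H H H).toLinearMap)) ∘ₗ
      (TensorProduct.tensorTensorTensorComm k H (H ⊗[k] H) H (H ⊗[k] H)).toLinearMap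

section Anti2

variable {k : Type*} [Field k] {H : Type*} [Ring H] [HopfAlgebra k H]

local notation "S" => HopfAlgebra.antipode (R := k) (A := H)
local notation "ε" => Coalgebra.counit (R := k)

@[simp] lemma hexMap_tmul (x y z u v w : H) :
    hexMap k H (x ⊗ₜ (y ⊗ₜ z)) (u ⊗ₜ (v ⊗ₜ w)) = S (x * u) * ((y * v) * (S w * S z)) := by
  simp [hexMap, TensorProduct.curry_apply]

/-- The antipode of a Hopf algebra is anti-multiplicative. -/
theorem antipode_anti (a b : H) :
    HopfAlgebra.antipode (R := k) (a * b) =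
      HopfAlgebra.antipode (R := k) b * HopfAlgebra.antipode (R := k) a := by
  classical
  set ra := ℛ k a with hra
  set rb := ℛ k b with hrb
  set ra1 : (i : H × H) → Coalgebra.Repr k (ra.left i) (H × H) := fun i => ℛ k (ra.left i) with hra1
  set ra2 : (i : H × H) → Coalgebra.Repr k (ra.right i) (H × H) := fun i => ℛ k (ra.right i) with hra2
  set rb1 : (j : H × H) → Coalgebra.Repr k (rb.left j) (H × H) := fun j => ℛ k (rb.left j) with hrb1
  set rb2 : (j : H × H) → Coalgebra.Repr k (rb.right j) (H × H) := fun j => ℛ k (rb.right j) with hrb2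
  have keyA := Coalgebra.sum_tmul_tmul_eq (R := k) ra ra1 ra2
  have keyB := Coalgebra.sum_tmul_tmul_eq (R := k) rb rb1 rb2
  have hQ1 : S (a * b) =
      hexMap k H
        (∑ i ∈ ra.index, ∑ p ∈ (ra2 i).index,
          ra.left i ⊗ₜ[k] ((ra2 i).left p ⊗ₜ[k] (ra2 i).right p))
        (∑ j ∈ rb.index, ∑ q ∈ (rb2 j).index,
          rb.left j ⊗ₜ[k] ((rb2 j).left q ⊗ₜ[k] (rb2 j).right q)) := by
    have hab : a * b = ∑ i ∈ ra.index, ∑ j ∈ rb.index,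
        (ε (ra.right i) * ε (rb.right j)) • (ra.left i * rb.left j) := by
      conv_lhs => rw [← repr_sum_smul_left a ra, ← repr_sum_smul_left b rb]
      rw [Finset.sum_mul_sum]
      exact Finset.sum_congr rfl fun i _ => Finset.sum_congr rfl fun j _ => by
        rw [smul_mul_assoc, mul_smul_comm, smul_smul]
    calc S (a * b)
        = ∑ i ∈ ra.index, ∑ j ∈ rb.index,
            S (ra.left i * rb.left j) * ((ε (ra.right i) * ε (rb.right j)) • (1 : H)) := by
          rw [hab]
          simp only [map_sum, map_smul]
          exact Finset.sum_congr rfl fun i _ => Finset.sum_congr rfl fun j _ => by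
            rw [mul_smul_comm, mul_one]
      _ = ∑ i ∈ ra.index, ∑ j ∈ rb.index,
            S (ra.left i * rb.left j) *
              (∑ p ∈ (ra2 i).index, ∑ q ∈ (rb2 j).index,
                ((ra2 i).left p * (rb2 j).left q) *
                  (S ((rb2 j).right q) * S ((ra2 i).right p))) := by
          exact Finset.sum_congr rfl fun i _ => Finset.sum_congr rfl fun j _ => by
            rw [mulantipode₂ (ra2 i) (rb2 j)]
      _ = ∑ i ∈ ra.index, ∑ j ∈ rb.index, ∑ p ∈ (ra2 i).index, ∑ q ∈ (rb2 j).index,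
            S (ra.left i * rb.left j) *
              (((ra2 i).left p * (rb2 j).left q) *
                (S ((rb2 j).right q) * S ((ra2 i).right p))) := by
          simp only [Finset.mul_sum]
      _ = ∑ i ∈ ra.index, ∑ p ∈ (ra2 i).index, ∑ j ∈ rb.index, ∑ q ∈ (rb2 j).index,
            S (ra.left i * rb.left j) *
              (((ra2 i).left p * (rb2 j).left q) *
                (S ((rb2 j).right q) * S ((ra2 i).right p))) := by
          exact Finset.sum_congr rfl fun i _ => Finset.sum_comm
      _ = _ := by
          simp only [map_sum, LinearMap.sum_apply, hexMap_tmul]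
          exact sum4_comm _ _ _ _ _
  have hQ2 : S b * S a =
      hexMap k H
        (∑ i ∈ ra.index, ∑ p ∈ (ra1 i).index,
          (ra1 i).left p ⊗ₜ[k] ((ra1 i).right p ⊗ₜ[k] ra.right i))
        (∑ j ∈ rb.index, ∑ q ∈ (rb1 j).index,
          (rb1 j).left q ⊗ₜ[k] ((rb1 j).right q ⊗ₜ[k] rb.right j)) := by
    have hba : S b * S a = ∑ i ∈ ra.index, ∑ j ∈ rb.index,
        (ε (ra.left i) * ε (rb.left j)) • (S (rb.right j) * S (ra.right i)) := by
      conv_lhs => rw [← repr_sum_smul_right a ra, ← repr_sum_smul_right b rb]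
      rw [map_sum, map_sum, Finset.sum_mul_sum, Finset.sum_comm]
      exact Finset.sum_congr rfl fun i _ => Finset.sum_congr rfl fun j _ => by
        rw [map_smul, map_smul, smul_mul_assoc, mul_smul_comm, smul_smul,
          mul_comm (ε (rb.left j))]
    calc S b * S a
        = ∑ i ∈ ra.index, ∑ j ∈ rb.index,
            ((ε (ra.left i) * ε (rb.left j)) • (1 : H)) * (S (rb.right j) * S (ra.right i)) := by
          rw [hba]
          exact Finset.sum_congr rfl fun i _ => Finset.sum_congr rfl fun j _ => by
            rw [smul_mul_assoc, one_mul]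
      _ = ∑ i ∈ ra.index, ∑ j ∈ rb.index,
            (∑ p ∈ (ra1 i).index, ∑ q ∈ (rb1 j).index,
              S ((ra1 i).left p * (rb1 j).left q) * ((ra1 i).right p * (rb1 j).right q)) *
              (S (rb.right j) * S (ra.right i)) := by
          exact Finset.sum_congr rfl fun i _ => Finset.sum_congr rfl fun j _ => by
            rw [antipodemul₂ (ra1 i) (rb1 j)]
      _ = ∑ i ∈ ra.index, ∑ j ∈ rb.index, ∑ p ∈ (ra1 i).index, ∑ q ∈ (rb1 j).index,
            S ((ra1 i).left p * (rb1 j).left q) *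
              (((ra1 i).right p * (rb1 j).right q) * (S (rb.right j) * S (ra.right i))) := by
          simp only [Finset.sum_mul]
          exact Finset.sum_congr rfl fun i _ => Finset.sum_congr rfl fun j _ =>
            Finset.sum_congr rfl fun p _ => Finset.sum_congr rfl fun q _ => by
              rw [mul_assoc]
      _ = ∑ i ∈ ra.index, ∑ p ∈ (ra1 i).index, ∑ j ∈ rb.index, ∑ q ∈ (rb1 j).index,
            S ((ra1 i).left p * (rb1 j).left q) *
              (((ra1 i).right p * (rb1 j).right q) * (S (rb.right j) * S (ra.right i))) := by
          exact Finset.sum_congr rfl fun i _ => Finset.sum_comm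
      _ = _ := by
          simp only [map_sum, LinearMap.sum_apply, hexMap_tmul]
          exact sum4_comm _ _ _ _ _
  rw [hQ1, hQ2, ← keyA, ← keyB]

/-- The transpose of the antipode maps the Sweedler dual to itself. -/
theorem sweedler_part1 (f : Module.Dual k H) (hf : InSweedlerDual k f) :
    InSweedlerDual k (f ∘ₗ HopfAlgebra.antipode (R := k)) := by
  classical
  unfold InSweedlerDual at hf ⊢
  haveI := hf
  set V := Submodule.span k (Set.range fun s : H => f ∘ₗ LinearMap.mulRight k s) with hV
  let T : H →ₗ[k] V :=
    { toFun := fun s => ⟨f ∘ₗ LinearMap.mulRight k s, Submodule.subset_span ⟨s, rfl⟩⟩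
      map_add' := fun s t => Subtype.ext <| LinearMap.ext fun x => by
        simp [mul_add]
      map_smul' := fun c s => Subtype.ext <| LinearMap.ext fun x => by
        simp [mul_smul_comm] }
  haveI : Module.Free k V := Module.Free.of_divisionRing k V
  let b := Module.finBasis k V
  let c : Fin (Module.finrank k V) → Module.Dual k H := fun j => (b.coord j) ∘ₗ T
  have key : ∀ (x s : H), f (x * s) = ∑ j, ((b j : Module.Dual k H) x) * c j s := by
    intro x s
    have h0 : ((T s : V) : Module.Dual k H) x = f (x * s) := rfl
    rw [← h0]
    conv_lhs => rw [← Module.Basis.sum_repr b (T s)]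
    rw [Submodule.coe_sum]
    simp only [SetLike.val_smul, LinearMap.sum_apply, LinearMap.smul_apply, smul_eq_mul, c,
      Module.Basis.coord_apply, LinearMap.comp_apply]
    exact Finset.sum_congr rfl fun j _ => mul_comm _ _
  have gen : ∀ s : H, (f ∘ₗ HopfAlgebra.antipode (R := k)) ∘ₗ LinearMap.mulRight k s
      = ∑ j, ((b j : Module.Dual k H) (S s)) • (c j ∘ₗ HopfAlgebra.antipode (R := k)) := by
    intro s
    ext x
    simp only [LinearMap.comp_apply, LinearMap.mulRight_apply, LinearMap.sum_apply,
      LinearMap.smul_apply, smul_eq_mul]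
    rw [antipode_anti x s]
    exact key (S s) (S x)
  have hle : Submodule.span k
        (Set.range fun s : H => (f ∘ₗ HopfAlgebra.antipode (R := k)) ∘ₗ LinearMap.mulRight k s)
      ≤ Submodule.span k (Set.range fun j => c j ∘ₗ HopfAlgebra.antipode (R := k)) := by
    rw [Submodule.span_le]
    rintro _ ⟨s, rfl⟩
    simp only [SetLike.mem_coe]
    rw [gen s]
    exact Submodule.sum_mem _ fun j _ =>
      Submodule.smul_mem _ _ (Submodule.subset_span ⟨j, rfl⟩)
  haveI : FiniteDimensional k
      (Submodule.span k (Set.range fun j => c j ∘ₗ HopfAlgebra.antipode (R := k))) :=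
    FiniteDimensional.span_of_finite k (Set.finite_range _)
  exact Submodule.finiteDimensional_of_le hle

/-- The antipode property for the dual. -/
theorem sweedler_part2 (f : Module.Dual k H) (n : ℕ) (g h : Fin n → Module.Dual k H)
    (hyp : ∀ x y : H, f (x * y) = ∑ i, g i x * h i y) :
    (∑ i, convProd (g i ∘ₗ HopfAlgebra.antipode (R := k)) (h i) =
        f 1 • counit (R := k)) ∧
    (∑ i, convProd (g i) (h i ∘ₗ HopfAlgebra.antipode (R := k)) =
        f 1 • counit (R := k)) := by
  constructor
  · set A : H ⊗[k] H →ₗ[k] k :=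
      ∑ i, (TensorProduct.lid k k).toLinearMap ∘ₗ
        TensorProduct.map (g i ∘ₗ HopfAlgebra.antipode (R := k)) (h i) with hAdef
    have hA : A = f ∘ₗ LinearMap.mul' k H ∘ₗ
        (HopfAlgebra.antipode (R := k)).rTensor H := by
      apply TensorProduct.ext'
      intro x y
      simp only [hAdef, LinearMap.sum_apply, LinearMap.comp_apply, TensorProduct.map_tmul,
        LinearMap.rTensor_tmul, LinearMap.mul'_apply, TensorProduct.lid_tmul, smul_eq_mul,
        LinearEquiv.coe_coe]
      exact (hyp (HopfAlgebra.antipode (R := k) x) y).symm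
    have e1 : ∑ i, convProd (g i ∘ₗ HopfAlgebra.antipode (R := k)) (h i) = A ∘ₗ comul := by
      ext x
      simp only [LinearMap.sum_apply, convProd, LinearMap.comp_apply, hAdef,
        LinearEquiv.coe_coe]
    rw [e1]
    ext x
    have hx := HopfAlgebra.mul_antipode_rTensor_comul_apply (R := k) (a := x)
    have h2 : (A ∘ₗ comul (R := k)) x
        = f (LinearMap.mul' k H ((HopfAlgebra.antipode (R := k)).rTensor H (comul x))) := by
      rw [hA]; simp [LinearMap.comp_apply]
    rw [h2, hx]
    simp [Algebra.algebraMap_eq_smul_one, mul_comm]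
  · set A : H ⊗[k] H →ₗ[k] k :=
      ∑ i, (TensorProduct.lid k k).toLinearMap ∘ₗ
        TensorProduct.map (g i) (h i ∘ₗ HopfAlgebra.antipode (R := k)) with hAdef
    have hA : A = f ∘ₗ LinearMap.mul' k H ∘ₗ
        (HopfAlgebra.antipode (R := k)).lTensor H := by
      apply TensorProduct.ext'
      intro x y
      simp only [hAdef, LinearMap.sum_apply, LinearMap.comp_apply, TensorProduct.map_tmul,
        LinearMap.lTensor_tmul, LinearMap.mul'_apply, TensorProduct.lid_tmul, smul_eq_mul,
        LinearEquiv.coe_coe]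
      exact (hyp x (HopfAlgebra.antipode (R := k) y)).symm
    have e1 : ∑ i, convProd (g i) (h i ∘ₗ HopfAlgebra.antipode (R := k)) = A ∘ₗ comul := by
      ext x
      simp only [LinearMap.sum_apply, convProd, LinearMap.comp_apply, hAdef,
        LinearEquiv.coe_coe]
    rw [e1]
    ext x
    have hx := HopfAlgebra.mul_antipode_lTensor_comul_apply (R := k) (a := x)
    have h2 : (A ∘ₗ comul (R := k)) x
        = f (LinearMap.mul' k H ((HopfAlgebra.antipode (R := k)).lTensor H (comul x))) := by
      rw [hA]; simp [LinearMap.comp_apply]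
    rw [h2, hx]
    simp [Algebra.algebraMap_eq_smul_one, mul_comm]

end Anti2

/-- the transpose `ᵗS : f ↦ f ∘ S` of the antipode maps `H⁰` into `H⁰`,
and it is an antipode for the dual bialgebra structure on `H⁰`: for any representation of
the coproduct of `f` (i.e. any decomposition `f(xy) = Σᵢ gᵢ(x)hᵢ(y)`), one has
`Σᵢ (gᵢ∘S) ∗ hᵢ = f(1)·ε` and `Σᵢ gᵢ ∗ (hᵢ∘S) = f(1)·ε`. -/
theorem sweedlerDual_antipode (k : Type*) [Field k] (H : Type*) [Ring H]
    [HopfAlgebra k H] (f : Module.Dual k H) (hf : InSweedlerDual k f) :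
    InSweedlerDual k (f ∘ₗ HopfAlgebra.antipode (R := k)) ∧
    (∀ (n : ℕ) (g h : Fin n → Module.Dual k H),
      (∀ x y : H, f (x * y) = ∑ i, g i x * h i y) →
      (∑ i, convProd (g i ∘ₗ HopfAlgebra.antipode (R := k)) (h i) =
          f 1 • counit (R := k) ∧
       ∑ i, convProd (g i) (h i ∘ₗ HopfAlgebra.antipode (R := k)) =
          f 1 • counit (R := k))) :=
  ⟨sweedler_part1 f hf, fun n g h hyp => sweedler_part2 f n g h hyp⟩
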